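/- arXiv:2306.04898 — 2 statements merged into one kernel-verified Lean document; each statement's English description precedes it below -/
import Mathlib

section
/- Let C ⊆ ℝ^{d_c}, S₁ ⊆ ℝ^{d_{s₁}}, S₂ ⊆ ℝ^{d_{s₂}} be open convex sets. Let h : C × S₁ × S₂ → ℝ^{d_c} × ℝ^{d_{s₁}} be differentiable, let g₁ : C × S₁ → ℝ^{d_{v₁}} be differentiable, and let ĝ₁ : ℝ^{d_c} × ℝ^{d_{s₁}} → ℝ^{d_{v₁}} be differentiable with injective Fréchet derivative at every point of the range of h. If g₁(c, s₁) = ĝ₁(h(c, s₁, s₂)) for all (c, s₁, s₂) ∈ C × S₁ × S₂, then h does not depend on s₂: h(c, s₁, s₂) = h(c, s₁, s₂') for all (c, s₁) ∈ C × S₁ and s₂, s₂' ∈ S₂. -/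
/-- Functional-equation lemma: if `g₁ (c, s₁) = ghat₁ (h (c, s₁, s₂))` on the open convex
domain `C × S₁ × S₂`, where `h`, `g₁` are differentiable there, and `ghat₁` is
differentiable with injective Fréchet derivative at every point of the range of `h`,
then `h` does not depend on `s₂`. -/
theorem h_independent_of_s₂
    {dc ds₁ ds₂ dv₁ : ℕ}
    (C : Set (Fin dc → ℝ)) (S₁ : Set (Fin ds₁ → ℝ)) (S₂ : Set (Fin ds₂ → ℝ))
    (hC : IsOpen C) (hCconv : Convex ℝ C)
    (hS₁ : IsOpen S₁) (hS₁conv : Convex ℝ S₁)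
    (hS₂ : IsOpen S₂) (hS₂conv : Convex ℝ S₂)
    (h : (Fin dc → ℝ) × (Fin ds₁ → ℝ) × (Fin ds₂ → ℝ) → (Fin dc → ℝ) × (Fin ds₁ → ℝ))
    (g₁ : (Fin dc → ℝ) × (Fin ds₁ → ℝ) → (Fin dv₁ → ℝ))
    (ghat₁ : (Fin dc → ℝ) × (Fin ds₁ → ℝ) → (Fin dv₁ → ℝ))
    (hhdiff : ∀ p ∈ C ×ˢ (S₁ ×ˢ S₂), DifferentiableAt ℝ h p)
    (hg₁diff : ∀ q ∈ C ×ˢ S₁, DifferentiableAt ℝ g₁ q)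
    (hghat₁diff : Differentiable ℝ ghat₁)
    (hghat₁inj : ∀ p ∈ C ×ˢ (S₁ ×ˢ S₂), Function.Injective (fderiv ℝ ghat₁ (h p)))
    (heq : ∀ c ∈ C, ∀ s₁ ∈ S₁, ∀ s₂ ∈ S₂, g₁ (c, s₁) = ghat₁ (h (c, s₁, s₂))) :
    ∀ c ∈ C, ∀ s₁ ∈ S₁, ∀ s₂ ∈ S₂, ∀ s₂' ∈ S₂, h (c, s₁, s₂) = h (c, s₁, s₂') := by
  intro c hc s₁ hs₁ s₂ hs₂ s₂' hs₂'
  set f : (Fin ds₂ → ℝ) → (Fin dc → ℝ) × (Fin ds₁ → ℝ) := fun t => h (c, s₁, t) with hf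
  have hfdiff : ∀ t ∈ S₂, DifferentiableAt ℝ f t := by
    intro t ht
    exact (hhdiff (c, s₁, t) ⟨hc, hs₁, ht⟩).comp t
      ((differentiableAt_const c).prodMk ((differentiableAt_const s₁).prodMk differentiableAt_id))
  have hderiv0 : ∀ t ∈ S₂, fderiv ℝ f t = 0 := by
    intro t ht
    have hconst : (fun u => ghat₁ (f u)) =ᶠ[nhds t] fun _ => g₁ (c, s₁) := by
      filter_upwards [hS₂.mem_nhds ht] with u hu
      exact (heq c hc s₁ hs₁ u hu).symm
    have hcomp : fderiv ℝ (fun u => ghat₁ (f u)) t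
        = (fderiv ℝ ghat₁ (f t)).comp (fderiv ℝ f t) :=
      fderiv_comp t (hghat₁diff (f t)) (hfdiff t ht)
    have hzero : fderiv ℝ (fun u => ghat₁ (f u)) t = 0 := by
      rw [hconst.fderiv_eq]; exact fderiv_const_apply _
    have hinj := hghat₁inj (c, s₁, t) ⟨hc, hs₁, ht⟩
    have hv : ∀ v, (fderiv ℝ f t) v = 0 := by
      intro v
      apply hinj
      have := congrArg (fun L => L v) (hcomp.symm.trans hzero)
      simpa using this
    exact ContinuousLinearMap.ext fun v => by simp [hv]
  have key : f s₂ = f s₂' := by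
    have hdiffOn : DifferentiableOn ℝ f S₂ := fun t ht =>
      (hfdiff t ht).differentiableWithinAt
    have := hS₂conv.norm_image_sub_le_of_norm_fderivWithin_le hdiffOn
      (C := 0) (fun t ht => by
        rw [fderivWithin_of_isOpen hS₂ ht, hderiv0 t ht]; simp) hs₂' hs₂
    have : ‖f s₂ - f s₂'‖ ≤ 0 := by simpa using this
    have := le_antisymm this (norm_nonneg _)
    rwa [norm_eq_zero, sub_eq_zero] at this
  exact key
end

section
/- Let d_c, d_{s₁}, d_{s₂}, d_{v₁}, d_{v₂} be natural numbers. Let g₁, ĝ₁ : ℝ^{d_c} × ℝ^{d_{s₁}} → ℝ^{d_{v₁}} and g₂, ĝ₂ : ℝ^{d_c} × ℝ^{d_{s₂}} → ℝ^{d_{v₂}} be continuously differentiable maps whose Fréchet derivatives are injective at Lebesgue-almost every point of their domains. Define g, ĝ : ℝ^{d_c} × ℝ^{d_{s₁}} × ℝ^{d_{s₂}} → ℝ^{d_{v₁}} × ℝ^{d_{v₂}} by g(c, s₁, s₂) = (g₁(c, s₁), g₂(c, s₂)) and ĝ(c, s₁, s₂) = (ĝ₁(c, s₁), ĝ₂(c,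 s₂)). Assume g and ĝ are injective with the same range, and that both g and ĝ are C¹ diffeomorphisms onto this common range (in particular their inverses are continuously differentiable on it). Then there exists a bijection k : ℝ^{d_c} → ℝ^{d_c} such that for all (c, s₁, s₂), the first block (the ℝ^{d_c}-component) of ĝ⁻¹(g(c, s₁, s₂)) equals k(c). -/
open MeasureTheory

section Aux

variable {E : Type*} [NormedAddCommGroup E] [NormedSpace ℝ E] [MeasurableSpace E]
  [BorelSpace E] [FiniteDimensional ℝ E]

/-- A differentiable self-map of a finite-dimensional space maps null sets to null sets. -/
lemma image_null_of_differentiable (μ : Measure E) [μ.IsAddHaarMeasure]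
    {f : E → E} (hf : Differentiable ℝ f) {s : Set E} (hs : μ s = 0) :
    μ (f '' s) = 0 :=
  addHaar_image_eq_zero_of_differentiableOn_of_addHaar_eq_zero μ hf.differentiableOn hs

end Aux

/-- Volume on a triple product of pi spaces is additive Haar. -/
lemma tripleHaar {a b c : ℕ} :
    (volume : Measure ((Fin a → ℝ) × (Fin b → ℝ) × (Fin c → ℝ))).IsAddHaarMeasure := by
  haveI : ((volume : Measure ((Fin b → ℝ) × (Fin c → ℝ)))).IsAddHaarMeasure := by
    rw [Measure.volume_eq_prod]; exact Measure.prod.instIsAddHaarMeasure _ _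
  rw [Measure.volume_eq_prod]; exact Measure.prod.instIsAddHaarMeasure _ _

/-- Null sets of the form "first and (2,1) coordinates in a null set" are null. -/
lemma pre_null₁ {a b c : ℕ} {S : Set ((Fin a → ℝ) × (Fin b → ℝ))}
    (hSm : MeasurableSet S) (hS : volume S = 0) :
    volume {x : (Fin a → ℝ) × (Fin b → ℝ) × (Fin c → ℝ) | (x.1, x.2.1) ∈ S} = 0 := by
  have hTm : MeasurableSet {x : (Fin a → ℝ) × (Fin b → ℝ) × (Fin c → ℝ) | (x.1, x.2.1) ∈ S} :=
    (measurable_fst.prodMk (measurable_fst.comp measurable_snd)) hSm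
  rw [Measure.volume_eq_prod] at hS ⊢
  rw [Measure.measure_prod_null hTm]
  have h1 := (Measure.measure_prod_null hSm).mp hS
  filter_upwards [h1] with q hq
  have : (Prod.mk q ⁻¹' {x : (Fin a → ℝ) × (Fin b → ℝ) × (Fin c → ℝ) | (x.1, x.2.1) ∈ S})
      = (Prod.mk q ⁻¹' S) ×ˢ (Set.univ : Set (Fin c → ℝ)) := by
    ext ⟨u, v⟩; simp [Set.mem_prod]
  simp only [this]
  rw [Measure.volume_eq_prod, Measure.prod_prod]
  simp only [Pi.zero_apply] at hq ⊢
  rw [hq, zero_mul]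

/-- Null sets of the form "first and (2,2) coordinates in a null set" are null. -/
lemma pre_null₂ {a b c : ℕ} {S : Set ((Fin a → ℝ) × (Fin c → ℝ))}
    (hSm : MeasurableSet S) (hS : volume S = 0) :
    volume {x : (Fin a → ℝ) × (Fin b → ℝ) × (Fin c → ℝ) | (x.1, x.2.2) ∈ S} = 0 := by
  have hTm : MeasurableSet {x : (Fin a → ℝ) × (Fin b → ℝ) × (Fin c → ℝ) | (x.1, x.2.2) ∈ S} :=
    (measurable_fst.prodMk (measurable_snd.comp measurable_snd)) hSm
  rw [Measure.volume_eq_prod] at hS ⊢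
  rw [Measure.measure_prod_null hTm]
  have h1 := (Measure.measure_prod_null hSm).mp hS
  filter_upwards [h1] with q hq
  have : (Prod.mk q ⁻¹' {x : (Fin a → ℝ) × (Fin b → ℝ) × (Fin c → ℝ) | (x.1, x.2.2) ∈ S})
      = (Set.univ : Set (Fin b → ℝ)) ×ˢ (Prod.mk q ⁻¹' S) := by
    ext ⟨u, v⟩; simp [Set.mem_prod]
  simp only [this]
  rw [Measure.volume_eq_prod, Measure.prod_prod]
  simp only [Pi.zero_apply] at hq ⊢
  rw [hq, mul_zero]

lemma content_core {dc ds₁ ds₂ dv₁ dv₂ : ℕ}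
    (g₁ ghat₁ : (Fin dc → ℝ) × (Fin ds₁ → ℝ) → (Fin dv₁ → ℝ))
    (g₂ ghat₂ : (Fin dc → ℝ) × (Fin ds₂ → ℝ) → (Fin dv₂ → ℝ))
    (hg₁ : ContDiff ℝ 1 g₁) (hghat₁ : ContDiff ℝ 1 ghat₁)
    (hg₂ : ContDiff ℝ 1 g₂) (hghat₂ : ContDiff ℝ 1 ghat₂)
    (hghat₁inj : ∀ᵐ q ∂(volume : Measure ((Fin dc → ℝ) × (Fin ds₁ → ℝ))),
      Function.Injective (fderiv ℝ ghat₁ q))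
    (hghat₂inj : ∀ᵐ q ∂(volume : Measure ((Fin dc → ℝ) × (Fin ds₂ → ℝ))),
      Function.Injective (fderiv ℝ ghat₂ q))
    (g ghat : (Fin dc → ℝ) × (Fin ds₁ → ℝ) × (Fin ds₂ → ℝ) → (Fin dv₁ → ℝ) × (Fin dv₂ → ℝ))
    (hgdef : ∀ c s₁ s₂, g (c, s₁, s₂) = (g₁ (c, s₁), g₂ (c, s₂)))
    (hghatdef : ∀ c s₁ s₂, ghat (c, s₁, s₂) = (ghat₁ (c, s₁), ghat₂ (c, s₂)))
    (hrange : Set.range g = Set.range ghat)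
    (gInv : (Fin dv₁ → ℝ) × (Fin dv₂ → ℝ) → (Fin dc → ℝ) × (Fin ds₁ → ℝ) × (Fin ds₂ → ℝ))
    (hgInv : ∀ p, gInv (g p) = p) (hgInvC1 : ContDiffOn ℝ 1 gInv (Set.range g))
    (ghatInv : (Fin dv₁ → ℝ) × (Fin dv₂ → ℝ) → (Fin dc → ℝ) × (Fin ds₁ → ℝ) × (Fin ds₂ → ℝ))
    (hghatInv : ∀ p, ghatInv (ghat p) = p)
    (hghatInvC1 : ContDiffOn ℝ 1 ghatInv (Set.range ghat)) :
    ∀ x y : (Fin dc → ℝ) × (Fin ds₁ → ℝ) × (Fin ds₂ → ℝ), x.1 = y.1 →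
      (ghatInv (g x)).1 = (ghatInv (g y)).1 := by
  set h : (Fin dc → ℝ) × (Fin ds₁ → ℝ) × (Fin ds₂ → ℝ) →
      (Fin dc → ℝ) × (Fin ds₁ → ℝ) × (Fin ds₂ → ℝ) := fun x => ghatInv (g x) with hh_def
  -- function forms
  have hgfun : g = fun x => (g₁ (x.1, x.2.1), g₂ (x.1, x.2.2)) := by
    funext x; obtain ⟨c, s₁, s₂⟩ := x; exact hgdef c s₁ s₂
  have hghatfun : ghat = fun x => (ghat₁ (x.1, x.2.1), ghat₂ (x.1, x.2.2)) := by
    funext x; obtain ⟨c, s₁, s₂⟩ := x; exact hghatdef c s₁ s₂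
  have hgC : ContDiff ℝ 1 g := by
    rw [hgfun]
    exact (hg₁.comp (contDiff_fst.prodMk (contDiff_fst.comp contDiff_snd))).prodMk
      (hg₂.comp (contDiff_fst.prodMk (contDiff_snd.comp contDiff_snd)))
  have hghatC : ContDiff ℝ 1 ghat := by
    rw [hghatfun]
    exact (hghat₁.comp (contDiff_fst.prodMk (contDiff_fst.comp contDiff_snd))).prodMk
      (hghat₂.comp (contDiff_fst.prodMk (contDiff_snd.comp contDiff_snd)))
  have hmem : ∀ x, g x ∈ Set.range ghat := fun x => hrange ▸ Set.mem_range_self x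
  have hhC : ContDiff ℝ 1 h := by
    rw [← contDiffOn_univ]
    exact hghatInvC1.comp hgC.contDiffOn (fun x _ => hmem x)
  have hgh : ∀ x, ghat (h x) = g x := by
    intro x
    obtain ⟨p, hp⟩ := hmem x
    rw [hh_def]; simp only
    rw [← hp, hghatInv p]
  -- inverse map
  set hinv : (Fin dc → ℝ) × (Fin ds₁ → ℝ) × (Fin ds₂ → ℝ) →
      (Fin dc → ℝ) × (Fin ds₁ → ℝ) × (Fin ds₂ → ℝ) := fun y => gInv (ghat y) with hinv_def
  have hinvC : ContDiff ℝ 1 hinv := by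
    rw [← contDiffOn_univ]
    exact hgInvC1.comp hghatC.contDiffOn
      (fun x _ => hrange ▸ Set.mem_range_self x)
  have hlinv : ∀ x, hinv (h x) = x := by
    intro x
    rw [hinv_def]; simp only
    rw [hgh x, hgInv x]
  -- componentwise equations
  have hE₁ : ∀ x, ghat₁ ((h x).1, (h x).2.1) = g₁ (x.1, x.2.1) := by
    intro x
    have hx := hgh x
    rw [hgfun, hghatfun] at hx
    exact congrArg Prod.fst hx
  have hE₂ : ∀ x, ghat₂ ((h x).1, (h x).2.2) = g₂ (x.1, x.2.2) := by
    intro x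
    have hx := hgh x
    rw [hgfun, hghatfun] at hx
    exact congrArg Prod.snd hx
  -- projections as continuous linear maps
  set P₁ : ((Fin dc → ℝ) × (Fin ds₁ → ℝ) × (Fin ds₂ → ℝ)) →L[ℝ]
      ((Fin dc → ℝ) × (Fin ds₁ → ℝ)) :=
    (ContinuousLinearMap.fst ℝ (Fin dc → ℝ) ((Fin ds₁ → ℝ) × (Fin ds₂ → ℝ))).prod
      ((ContinuousLinearMap.fst ℝ (Fin ds₁ → ℝ) (Fin ds₂ → ℝ)).comp
        (ContinuousLinearMap.snd ℝ (Fin dc → ℝ) ((Fin ds₁ → ℝ) × (Fin ds₂ → ℝ)))) with hP₁def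
  set P₂ : ((Fin dc → ℝ) × (Fin ds₁ → ℝ) × (Fin ds₂ → ℝ)) →L[ℝ]
      ((Fin dc → ℝ) × (Fin ds₂ → ℝ)) :=
    (ContinuousLinearMap.fst ℝ (Fin dc → ℝ) ((Fin ds₁ → ℝ) × (Fin ds₂ → ℝ))).prod
      ((ContinuousLinearMap.snd ℝ (Fin ds₁ → ℝ) (Fin ds₂ → ℝ)).comp
        (ContinuousLinearMap.snd ℝ (Fin dc → ℝ) ((Fin ds₁ → ℝ) × (Fin ds₂ → ℝ)))) with hP₂def
  have hP₁app : ∀ x, P₁ x = (x.1, x.2.1) := fun x => rfl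
  have hP₂app : ∀ x, P₂ x = (x.1, x.2.2) := fun x => rfl
  -- chain rule identities
  have hD₁ : ∀ x, (fderiv ℝ ghat₁ (P₁ (h x))).comp (P₁.comp (fderiv ℝ h x))
      = (fderiv ℝ g₁ (P₁ x)).comp P₁ := by
    intro x
    have hdh : HasFDerivAt h (fderiv ℝ h x) x := ((hhC.differentiable one_ne_zero) x).hasFDerivAt
    have hcomp₁ : HasFDerivAt (fun y => ghat₁ (P₁ (h y)))
        ((fderiv ℝ ghat₁ (P₁ (h x))).comp (P₁.comp (fderiv ℝ h x))) x :=
      ((hghat₁.differentiable one_ne_zero) (P₁ (h x))).hasFDerivAt.comp x (P₁.hasFDerivAt.comp x hdh)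
    have hcomp₂ : HasFDerivAt (fun y => g₁ (P₁ y)) ((fderiv ℝ g₁ (P₁ x)).comp P₁) x :=
      ((hg₁.differentiable one_ne_zero) (P₁ x)).hasFDerivAt.comp x P₁.hasFDerivAt
    have heq : (fun y => ghat₁ (P₁ (h y))) = fun y => g₁ (P₁ y) := funext fun y => hE₁ y
    rw [heq] at hcomp₁
    exact hcomp₁.unique hcomp₂
  have hD₂ : ∀ x, (fderiv ℝ ghat₂ (P₂ (h x))).comp (P₂.comp (fderiv ℝ h x))
      = (fderiv ℝ g₂ (P₂ x)).comp P₂ := by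
    intro x
    have hdh : HasFDerivAt h (fderiv ℝ h x) x := ((hhC.differentiable one_ne_zero) x).hasFDerivAt
    have hcomp₁ : HasFDerivAt (fun y => ghat₂ (P₂ (h y)))
        ((fderiv ℝ ghat₂ (P₂ (h x))).comp (P₂.comp (fderiv ℝ h x))) x :=
      ((hghat₂.differentiable one_ne_zero) (P₂ (h x))).hasFDerivAt.comp x (P₂.hasFDerivAt.comp x hdh)
    have hcomp₂ : HasFDerivAt (fun y => g₂ (P₂ y)) ((fderiv ℝ g₂ (P₂ x)).comp P₂) x :=
      ((hg₂.differentiable one_ne_zero) (P₂ x)).hasFDerivAt.comp x P₂.hasFDerivAt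
    have heq : (fun y => ghat₂ (P₂ (h y))) = fun y => g₂ (P₂ y) := funext fun y => hE₂ y
    rw [heq] at hcomp₁
    exact hcomp₁.unique hcomp₂
  -- the a.e. injectivity transported along h
  haveI : (volume : Measure ((Fin dc → ℝ) × (Fin ds₁ → ℝ) × (Fin ds₂ → ℝ))).IsAddHaarMeasure :=
    tripleHaar
  have hS₁null : volume (toMeasurable volume
      {q : (Fin dc → ℝ) × (Fin ds₁ → ℝ) | ¬ Function.Injective (fderiv ℝ ghat₁ q)}) = 0 :=
    (measure_toMeasurable _).trans (ae_iff.mp hghat₁inj)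
  have hS₂null : volume (toMeasurable volume
      {q : (Fin dc → ℝ) × (Fin ds₂ → ℝ) | ¬ Function.Injective (fderiv ℝ ghat₂ q)}) = 0 :=
    (measure_toMeasurable _).trans (ae_iff.mp hghat₂inj)
  have hT₁ : volume {x : (Fin dc → ℝ) × (Fin ds₁ → ℝ) × (Fin ds₂ → ℝ) |
      ((h x).1, (h x).2.1) ∈ toMeasurable volume
        {q : (Fin dc → ℝ) × (Fin ds₁ → ℝ) | ¬ Function.Injective (fderiv ℝ ghat₁ q)}} = 0 := by
    have h0 := pre_null₁ (c := ds₂) (measurableSet_toMeasurable _ _) hS₁null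
    refine measure_mono_null ?_
      (image_null_of_differentiable volume (hinvC.differentiable one_ne_zero) h0)
    intro x hx
    exact ⟨h x, hx, hlinv x⟩
  have hT₂ : volume {x : (Fin dc → ℝ) × (Fin ds₁ → ℝ) × (Fin ds₂ → ℝ) |
      ((h x).1, (h x).2.2) ∈ toMeasurable volume
        {q : (Fin dc → ℝ) × (Fin ds₂ → ℝ) | ¬ Function.Injective (fderiv ℝ ghat₂ q)}} = 0 := by
    have h0 := pre_null₂ (b := ds₁) (measurableSet_toMeasurable _ _) hS₂null
    refine measure_mono_null ?_
      (image_null_of_differentiable volume (hinvC.differentiable one_ne_zero) h0)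
    intro x hx
    exact ⟨h x, hx, hlinv x⟩
  have hgood₁ : ∀ᵐ x ∂(volume : Measure ((Fin dc → ℝ) × (Fin ds₁ → ℝ) × (Fin ds₂ → ℝ))),
      Function.Injective (fderiv ℝ ghat₁ ((h x).1, (h x).2.1)) := by
    rw [ae_iff]
    refine measure_mono_null ?_ hT₁
    intro x hx
    exact subset_toMeasurable _ _ hx
  have hgood₂ : ∀ᵐ x ∂(volume : Measure ((Fin dc → ℝ) × (Fin ds₁ → ℝ) × (Fin ds₂ → ℝ))),
      Function.Injective (fderiv ℝ ghat₂ ((h x).1, (h x).2.2)) := by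
    rw [ae_iff]
    refine measure_mono_null ?_ hT₂
    intro x hx
    exact subset_toMeasurable _ _ hx
  -- the derivative of the content block in the style directions vanishes a.e., hence everywhere
  set Φ : ((Fin dc → ℝ) × (Fin ds₁ → ℝ) × (Fin ds₂ → ℝ)) →
      (((Fin ds₁ → ℝ) × (Fin ds₂ → ℝ)) →L[ℝ] (Fin dc → ℝ)) := fun x =>
    (ContinuousLinearMap.fst ℝ (Fin dc → ℝ) ((Fin ds₁ → ℝ) × (Fin ds₂ → ℝ))).comp
      ((fderiv ℝ h x).comp
        (ContinuousLinearMap.inr ℝ (Fin dc → ℝ) ((Fin ds₁ → ℝ) × (Fin ds₂ → ℝ)))) with hΦdef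
  have hΦc : Continuous Φ :=
    continuous_const.clm_comp ((hhC.continuous_fderiv one_ne_zero).clm_comp continuous_const)
  have hΦ0 : Φ = fun _ => 0 := by
    rw [← Continuous.ae_eq_iff_eq volume hΦc continuous_const]
    filter_upwards [hgood₁, hgood₂] with x hx₁ hx₂
    refine ContinuousLinearMap.ext fun v => ?_
    obtain ⟨u, w⟩ := v
    have hsplit : ((0, (u, w)) : (Fin dc → ℝ) × (Fin ds₁ → ℝ) × (Fin ds₂ → ℝ))
        = (0, (u, 0)) + (0, (0, w)) := by
      simp [Prod.ext_iff]
    have hz₁ : (fderiv ℝ h x (0, (u, 0))).1 = 0 := by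
      have e2 := DFunLike.congr_fun (hD₂ x) ((0, (u, 0)) :
        (Fin dc → ℝ) × (Fin ds₁ → ℝ) × (Fin ds₂ → ℝ))
      simp only [ContinuousLinearMap.comp_apply] at e2
      have hP₂v : P₂ ((0, (u, 0)) : (Fin dc → ℝ) × (Fin ds₁ → ℝ) × (Fin ds₂ → ℝ)) = 0 := rfl
      rw [hP₂v, map_zero] at e2
      have h0 : fderiv ℝ ghat₂ (P₂ (h x)) (P₂ (fderiv ℝ h x (0, (u, 0))))
          = fderiv ℝ ghat₂ (P₂ (h x)) 0 := by rw [e2, map_zero]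
      have := hx₂ h0
      exact congrArg Prod.fst this
    have hz₂ : (fderiv ℝ h x (0, (0, w))).1 = 0 := by
      have e1 := DFunLike.congr_fun (hD₁ x) ((0, (0, w)) :
        (Fin dc → ℝ) × (Fin ds₁ → ℝ) × (Fin ds₂ → ℝ))
      simp only [ContinuousLinearMap.comp_apply] at e1
      have hP₁v : P₁ ((0, (0, w)) : (Fin dc → ℝ) × (Fin ds₁ → ℝ) × (Fin ds₂ → ℝ)) = 0 := rfl
      rw [hP₁v, map_zero] at e1
      have h0 : fderiv ℝ ghat₁ (P₁ (h x)) (P₁ (fderiv ℝ h x (0, (0, w))))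
          = fderiv ℝ ghat₁ (P₁ (h x)) 0 := by rw [e1, map_zero]
      have := hx₁ h0
      exact congrArg Prod.fst this
    show ((fderiv ℝ h x) (0, (u, w))).1 = 0
    rw [hsplit, map_add, Prod.fst_add, hz₁, hz₂, add_zero]
  -- the content block is constant in the style variables
  have key : ∀ (c : Fin dc → ℝ) (s t : (Fin ds₁ → ℝ) × (Fin ds₂ → ℝ)),
      (h (c, s)).1 = (h (c, t)).1 := by
    intro c s t
    have hF : ∀ s : (Fin ds₁ → ℝ) × (Fin ds₂ → ℝ),
        HasFDerivAt (fun s => (h (c, s)).1) (Φ (c, s)) s := by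
      intro s
      exact (ContinuousLinearMap.fst ℝ (Fin dc → ℝ)
          ((Fin ds₁ → ℝ) × (Fin ds₂ → ℝ))).hasFDerivAt.comp s
        (((hhC.differentiable one_ne_zero) (c, s)).hasFDerivAt.comp s (hasFDerivAt_prodMk_right c s))
    exact is_const_of_fderiv_eq_zero (fun s => (hF s).differentiableAt)
      (fun s => by rw [(hF s).fderiv, hΦ0]) s t
  intro x y hxy
  calc (ghatInv (g x)).1 = (h (x.1, x.2)).1 := by rw [Prod.mk.eta]
    _ = (h (x.1, y.2)).1 := key x.1 x.2 y.2
    _ = (h (y.1, y.2)).1 := by rw [hxy]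
    _ = (ghatInv (g y)).1 := by rw [Prod.mk.eta]

/-- Block-identifiability of the shared content, with the almost-everywhere
non-singular Jacobian condition: `g₁, ghat₁, g₂, ghat₂` are `C¹` with Fréchet derivatives
injective at Lebesgue-almost every point, the assembled maps
`g (c, s₁, s₂) = (g₁ (c, s₁), g₂ (c, s₂))` and `ghat (c, s₁, s₂) = (ghat₁ (c, s₁), ghat₂ (c, s₂))`
are injective with the same range, and both are `C¹` diffeomorphisms onto this common
range (their inverses are `C¹` on it). Then the content block of `ghat⁻¹ ∘ g` is a
bijection of `c`. -/
theorem content_block_identifiable_ae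
    {dc ds₁ ds₂ dv₁ dv₂ : ℕ}
    (g₁ ghat₁ : (Fin dc → ℝ) × (Fin ds₁ → ℝ) → (Fin dv₁ → ℝ))
    (g₂ ghat₂ : (Fin dc → ℝ) × (Fin ds₂ → ℝ) → (Fin dv₂ → ℝ))
    (hg₁ : ContDiff ℝ 1 g₁) (hghat₁ : ContDiff ℝ 1 ghat₁)
    (hg₂ : ContDiff ℝ 1 g₂) (hghat₂ : ContDiff ℝ 1 ghat₂)
    (hg₁inj : ∀ᵐ q ∂(volume : Measure ((Fin dc → ℝ) × (Fin ds₁ → ℝ))),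
      Function.Injective (fderiv ℝ g₁ q))
    (hghat₁inj : ∀ᵐ q ∂(volume : Measure ((Fin dc → ℝ) × (Fin ds₁ → ℝ))),
      Function.Injective (fderiv ℝ ghat₁ q))
    (hg₂inj : ∀ᵐ q ∂(volume : Measure ((Fin dc → ℝ) × (Fin ds₂ → ℝ))),
      Function.Injective (fderiv ℝ g₂ q))
    (hghat₂inj : ∀ᵐ q ∂(volume : Measure ((Fin dc → ℝ) × (Fin ds₂ → ℝ))),
      Function.Injective (fderiv ℝ ghat₂ q))
    (g ghat : (Fin dc → ℝ) × (Fin ds₁ → ℝ) × (Fin ds₂ → ℝ) → (Fin dv₁ → ℝ) × (Fin dv₂ → ℝ))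
    (hgdef : ∀ c s₁ s₂, g (c, s₁, s₂) = (g₁ (c, s₁), g₂ (c, s₂)))
    (hghatdef : ∀ c s₁ s₂, ghat (c, s₁, s₂) = (ghat₁ (c, s₁), ghat₂ (c, s₂)))
    (hginj : Function.Injective g) (hghatinj : Function.Injective ghat)
    (hrange : Set.range g = Set.range ghat)
    -- `g` is a `C¹` diffeomorphism onto the common range: its inverse is `C¹` there
    (gInv : (Fin dv₁ → ℝ) × (Fin dv₂ → ℝ) → (Fin dc → ℝ) × (Fin ds₁ → ℝ) × (Fin ds₂ → ℝ))
    (hgInv : ∀ p, gInv (g p) = p) (hgInvC1 : ContDiffOn ℝ 1 gInv (Set.range g))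
    -- likewise for `ghat`
    (ghatInv : (Fin dv₁ → ℝ) × (Fin dv₂ → ℝ) → (Fin dc → ℝ) × (Fin ds₁ → ℝ) × (Fin ds₂ → ℝ))
    (hghatInv : ∀ p, ghatInv (ghat p) = p) (hghatInvC1 : ContDiffOn ℝ 1 ghatInv (Set.range ghat)) :
    ∃ k : (Fin dc → ℝ) → (Fin dc → ℝ), Function.Bijective k ∧
      ∀ c s₁ s₂, (ghatInv (g (c, s₁, s₂))).1 = k c := by
  have core₁ := content_core g₁ ghat₁ g₂ ghat₂ hg₁ hghat₁ hg₂ hghat₂ hghat₁inj hghat₂inj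
    g ghat hgdef hghatdef hrange gInv hgInv hgInvC1 ghatInv hghatInv hghatInvC1
  have core₂ := content_core ghat₁ g₁ ghat₂ g₂ hghat₁ hg₁ hghat₂ hg₂ hg₁inj hg₂inj
    ghat g hghatdef hgdef hrange.symm ghatInv hghatInv hghatInvC1 gInv hgInv hgInvC1
  -- the two inverse identities on the common range
  have hgh : ∀ p, ghat (ghatInv (g p)) = g p := by
    intro p
    obtain ⟨q, hq⟩ : g p ∈ Set.range ghat := hrange ▸ Set.mem_range_self p
    rw [← hq, hghatInv q]
  have hgg : ∀ p, g (gInv (ghat p)) = ghat p := by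
    intro p
    obtain ⟨q, hq⟩ : ghat p ∈ Set.range g := hrange ▸ Set.mem_range_self p
    rw [← hq, hgInv q]
  refine ⟨fun c => (ghatInv (g (c, 0, 0))).1, ⟨?_, ?_⟩, fun c s₁ s₂ => core₁ (c, s₁, s₂) (c, 0, 0) rfl⟩
  · -- injective, via the left inverse c ↦ (gInv (ghat (c, 0, 0))).1
    have hli : ∀ c, (gInv (ghat ((ghatInv (g (c, 0, 0))).1, 0, 0))).1 = c := by
      intro c
      have h1 := core₂ ((ghatInv (g (c, 0, 0))).1, 0, 0) (ghatInv (g (c, 0, 0))) rfl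
      rw [h1, hgh (c, 0, 0), hgInv (c, 0, 0)]
    intro a b hab
    have hab' : (ghatInv (g (a, 0, 0))).1 = (ghatInv (g (b, 0, 0))).1 := hab
    have := hli a
    rw [hab', hli b] at this
    exact this.symm
  · -- surjective
    intro c
    refine ⟨(gInv (ghat (c, 0, 0))).1, ?_⟩
    show (ghatInv (g ((gInv (ghat (c, 0, 0))).1, 0, 0))).1 = c
    have h1 := core₁ ((gInv (ghat (c, 0, 0))).1, 0, 0) (gInv (ghat (c, 0, 0))) rfl
    rw [h1, hgg (c, 0, 0), hghatInv (c, 0, 0)]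
end
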